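/- If there exist functions lgcd : (ℕ → Option M) → M and red : (ℕ → Option M) → (ℕ → Option M) satisfying conditions (a) and (b), then Kl(T_M) has all countable products: for every family of types (X i)_{i : ℕ} there is a type P with projections πᵢ : P → Option (M × X i) such that for every type Z and every family of Kleisli morphisms fᵢ : Z → Option (M × X i) there is a unique Kleisli morphism h : Z → Option (M × P) with πᵢ ∘ h = fᵢ for all i. -/

import Mathlib

/-- Kleisli composition for the monad `T_M X = Option (M × X)`. -/
def KlComp {M : Type} [Monoid M] {X Y Z : Type}
    (g : Y → Option (M × Z)) (f : X → Option (M × Y)) : X → Option (M × Z) :=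
  fun x => (f x).bind fun p => (g p.2).map fun q => (p.1 * q.1, q.2)

/-- The Kleisli identity on `X`. -/
def KlId (M : Type) [Monoid M] (X : Type) : X → Option (M × X) :=
  fun x => some (1, x)

/-- A Kleisli morphism is an isomorphism when it has a two-sided inverse. -/
def IsKlIso {M : Type} [Monoid M] {X Y : Type} (f : X → Option (M × Y)) : Prop :=
  ∃ g : Y → Option (M × X), KlComp g f = KlId M X ∧ KlComp f g = KlId M Y

/-- The class `Surj` of Kleisli morphisms. -/
def KlSurj {M X Y : Type} (f : X → Option (M × Y)) : Prop :=
  ∀ y : Y, ∃ (x : X) (υ : M), f x = some (υ, y)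

/-- The class `Inj` of Kleisli morphisms. -/
def KlInj {M X Y : Type} (f : X → Option (M × Y)) : Prop :=
  ∀ (x x' : X) (υ υ' : M) (y : Y), f x = some (υ, y) → f x' = some (υ', y) → x = x'

/-- The class `Tot` of Kleisli morphisms. -/
def KlTot {M X Y : Type} (f : X → Option (M × Y)) : Prop :=
  ∀ x : X, f x ≠ none

/-- The class `Inv` of Kleisli morphisms. -/
def KlInv {M : Type} [Monoid M] {X Y : Type} (f : X → Option (M × Y)) : Prop :=
  ∀ (x : X) (υ : M) (y : Y), f x = some (υ, y) → IsUnit υ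
/-- `Λ : ℕ → Option M` is nontrivial if it is defined somewhere. -/
def NontrivialFn {M : Type} (Λ : ℕ → Option M) : Prop :=
  Λ ≠ fun _ => none

/-- `υ • Λ`, multiplying each defined value of `Λ` by `υ` on the left. -/
def smulFn {M : Type} [Monoid M] (υ : M) (Λ : ℕ → Option M) : ℕ → Option M :=
  fun n => (Λ n).map (υ * ·)

/-- The functions `lgcd` and `red` satisfy conditions (a) and (b). -/
def SatisfiesLgcdRed (M : Type) [Monoid M] (lgcd : (ℕ → Option M) → M)
    (red : (ℕ → Option M) → (ℕ → Option M)) : Prop :=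
  (∀ Λ, NontrivialFn Λ → NontrivialFn (red Λ)) ∧
  (∀ Λ, NontrivialFn Λ → Λ = smulFn (lgcd Λ) (red Λ)) ∧
  (∀ Γ Λ, NontrivialFn Γ → NontrivialFn Λ → ∀ υ ν : M,
    smulFn υ (red Γ) = smulFn ν (red Λ) → υ = ν ∧ red Γ = red Λ)

theorem countable_products_of_lgcd_red (M : Type) [Monoid M]
    (lgcd : (ℕ → Option M) → M) (red : (ℕ → Option M) → (ℕ → Option M))
    (h : SatisfiesLgcdRed M lgcd red) :
    ∀ X : ℕ → Type,
      ∃ (P : Type) (π : ∀ i : ℕ, P → Option (M × X i)),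
        ∀ (Z : Type) (f : ∀ i : ℕ, Z → Option (M × X i)),
          ∃! g : Z → Option (M × P), ∀ i : ℕ, KlComp (π i) g = f i := by
  classical
  obtain ⟨hnt, ha, hb⟩ := h
  intro X
  refine ⟨{ p : ∀ i, Option (M × X i) //
      ∃ Γ, NontrivialFn Γ ∧ (fun i => (p i).map Prod.fst) = red Γ },
    fun i p => p.1 i, ?_⟩
  intro Z f
  set wt : Z → ℕ → Option M := fun z i => (f i z).map Prod.fst with hwtdef
  have key : ∀ z, NontrivialFn (wt z) →
      (fun i => (((f i z).bind fun q =>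
        (red (wt z) i).map fun m => ((m, q.2) : M × X i))).map Prod.fst) = red (wt z) := by
    intro z hz
    funext i
    have hA : wt z i = (red (wt z) i).map (lgcd (wt z) * ·) :=
      congrFun (ha (wt z) hz) i
    cases hr : red (wt z) i with
    | none =>
        rw [hr] at hA
        have hf : f i z = none := by
          cases hf : f i z with
          | none => rfl
          | some q => simp [hwtdef, hf] at hA
        simp [hf]
    | some m =>
        rw [hr] at hA
        obtain ⟨q, hq⟩ : ∃ q, f i z = some q := by
          cases hf : f i z with
          | none => simp [hwtdef, hf] at hA
          | some q => exact ⟨q, rfl⟩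
        simp [hq, hr]
  refine ⟨fun z =>
    if hz : NontrivialFn (wt z) then
      some (lgcd (wt z), ⟨fun i => (f i z).bind fun q =>
        (red (wt z) i).map fun m => ((m, q.2) : M × X i), wt z, hz, key z hz⟩)
    else none, ?_, ?_⟩
  · intro i
    funext z
    by_cases hz : NontrivialFn (wt z)
    · have hA : wt z i = (red (wt z) i).map (lgcd (wt z) * ·) :=
        congrFun (ha (wt z) hz) i
      cases hf : f i z with
      | none => simp [KlComp, hz, hf]
      | some q =>
          have hw : wt z i = some q.1 := by simp [hwtdef, hf]
          rw [hw] at hA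
          obtain ⟨m, hm, hqm⟩ : ∃ m, red (wt z) i = some m ∧ q.1 = lgcd (wt z) * m := by
            cases hr : red (wt z) i with
            | none => rw [hr] at hA; simp at hA
            | some m => rw [hr] at hA; exact ⟨m, rfl, by simpa using hA⟩
          simp [KlComp, hz, hf, hm, ← hqm]
    · have hwz : wt z = fun _ => none := not_not.mp (fun hc => hz hc)
      have hf : f i z = none := by
        have := congrFun hwz i
        cases hf : f i z with
        | none => rfl
        | some q => simp [hwtdef, hf] at this
      simp [KlComp, hz, hf]
  · intro g' hg'
    funext z
    cases hg'z : g' z with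
    | none =>
        have hf : ∀ i, f i z = none := by
          intro i
          rw [← hg' i]
          simp [KlComp, hg'z]
        have hwz : ¬ NontrivialFn (wt z) := by
          intro hc
          exact hc (funext fun i => by simp [hwtdef, hf i])
        simp [hwz]
    | some up =>
        obtain ⟨υ, p⟩ := up
        obtain ⟨Γ, hΓ, hred⟩ := p.2
        have hf : ∀ i, f i z = (p.1 i).map fun q => (υ * q.1, q.2) := by
          intro i
          rw [← hg' i]
          simp [KlComp, hg'z]
        have hwz : wt z = smulFn υ (red Γ) := by
          funext i
          have h1 : (p.1 i).map Prod.fst = red Γ i := congrFun hred i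
          cases hp : p.1 i with
          | none => rw [hp] at h1; simp [hwtdef, hf i, hp, smulFn, ← h1]
          | some q => rw [hp] at h1; simp [hwtdef, hf i, hp, smulFn, ← h1]
        have hz : NontrivialFn (wt z) := by
          intro hc
          apply hnt Γ hΓ
          funext n
          have h2 : smulFn υ (red Γ) n = none := by rw [← hwz, hc]
          simpa [smulFn, Option.map_eq_none_iff] using h2
        have hba := hb Γ (wt z) hΓ hz υ (lgcd (wt z))
          (by rw [← hwz]; exact ha (wt z) hz)
        obtain ⟨hυ, hrr⟩ := hba
        rw [dif_pos hz]
        congr 1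
        refine Prod.ext hυ ?_
        dsimp only
        apply Subtype.ext
        funext i
        have h1 : (p.1 i).map Prod.fst = red (wt z) i := by
          rw [congrFun hred i, congrFun hrr i]
        cases hp : p.1 i with
        | none =>
            rw [hp] at h1
            simp [hf i, hp]
        | some q =>
            rw [hp] at h1
            simp [hf i, hp, ← h1]
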